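/- Let A be an abelian category with a pair of exceptional objects (E₁, E₂) over a field k that is orthogonal (Hom(E₁,E₂) = Hom(E₂,E₁) = 0 and Ext¹(E₂,E₁) = 0), and suppose there is a non-split short exact sequence 0 → E₂ → E → E₁ → 0 with E exceptional. Then dim_k Ext¹(E₁,E₂) = dim_k Hom(E₂,E) = dim_k Hom(E,E₁) = 1. -/

import Mathlib

open CategoryTheory CategoryTheory.Limits

/-- An object `X` of a `k`-linear abelian category is exceptional if `End(X) ≅ k`
(i.e. `dim_k End(X) = 1`) and `Ext¹(X, X) = 0`. -/
def IsExceptional (k : Type*) [Field k] (C : Type*) [Category C] [Abelian C] [Linear k C]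
    [EnoughProjectives C] (X : C) : Prop :=
  Module.finrank k (X ⟶ X) = 1 ∧
    Subsingleton (((Ext k C 1).obj (Opposite.op X)).obj X)

noncomputable section AuxiliaryLemmas

set_option linter.unusedSectionVars false

universe v u

namespace OEPaux

open Projective

section Res

variable {C : Type u} [Category.{v} C] [Abelian C] [EnoughProjectives C]
variable {Z P₀ : C} (π₀ : P₀ ⟶ Z) [Projective P₀] [Epi π₀]

/-- complex of a projective resolution starting with a prescribed epi from a projective. -/
def ofComplex' : ChainComplex C ℕ :=
  ChainComplex.mk' P₀ (Projective.syzygies π₀) (Projective.d π₀)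
    (fun f => ⟨_, Projective.d f, by erw [Category.assoc, kernel.condition, comp_zero]⟩)

lemma ofComplex'_d_1_0 : (ofComplex' π₀).d 1 0 = d π₀ := by
  simp [ofComplex']

lemma ofComplex'_exactAt_succ (n : ℕ) : (ofComplex' π₀).ExactAt (n + 1) := by
  match n with
  | 0 =>
    rw [HomologicalComplex.exactAt_iff' _ 2 1 0 (by simp) (by simp)]
    refine ShortComplex.exact_of_iso ?_ (CategoryTheory.exact_d_f (d π₀))
    refine ShortComplex.isoMk (Iso.refl _) (Iso.refl _) (Iso.refl _) ?_ ?_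
    · erw [Category.comp_id, Category.id_comp]
      exact ChainComplex.mk_d_2_1 _ _ _ _ _ _ _
    · erw [Category.comp_id, Category.id_comp]
      exact ofComplex'_d_1_0 π₀
  | n + 1 =>
    rw [HomologicalComplex.exactAt_iff' _ (n + 3) (n + 2) (n + 1) (by simp) (by simp)]
    let e : (ofComplex' π₀).X (n + 3) ≅ syzygies ((ofComplex' π₀).d (n + 2) (n + 1)) :=
      ChainComplex.mkXIso P₀ (syzygies π₀) (syzygies (d π₀)) (d π₀)
      (d (d π₀)) (by erw [Category.assoc, kernel.condition, comp_zero])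
      (fun S => ⟨_, Projective.d S.f, by erw [Category.assoc, kernel.condition, comp_zero]⟩) n
    have hd : (ofComplex' π₀).d (n + 3) (n + 2) =
        e.hom ≫ d ((ofComplex' π₀).d (n + 2) (n + 1)) :=
      ChainComplex.mk_d _ _ _ _ _ _ _ n
    refine ShortComplex.exact_of_iso ?_
      (CategoryTheory.exact_d_f ((ofComplex' π₀).d (n + 2) (n + 1)))
    refine ShortComplex.isoMk e.symm (Iso.refl _) (Iso.refl _) ?_ ?_
    · erw [Category.comp_id]
      exact (Iso.inv_comp_eq e).2 hd
    · erw [Category.comp_id, Category.id_comp]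
      rfl

instance (n : ℕ) : Projective ((ofComplex' π₀).X n) := by
  obtain (_ | _ | _ | n) := n
  · exact (inferInstance : Projective P₀)
  all_goals apply Projective.projective_over

/-- A projective resolution with prescribed zeroth step. -/
def res : ProjectiveResolution Z where
  complex := ofComplex' π₀
  π := (ChainComplex.toSingle₀Equiv _ _).symm ⟨π₀, by
          rw [ofComplex'_d_1_0]; exact (by simp : (Projective.π (kernel π₀) ≫ kernel.ι π₀) ≫ π₀ = 0)⟩
  quasiIso := ⟨fun n => by
    cases n
    · rw [ChainComplex.quasiIsoAt₀_iff, ShortComplex.quasiIso_iff_of_zeros']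
      · refine (ShortComplex.exact_and_epi_g_iff_of_iso ?_).2
          ⟨CategoryTheory.exact_d_f π₀, by dsimp; infer_instance⟩
        exact ShortComplex.isoMk (Iso.refl _) (Iso.refl _) (Iso.refl _)
          (by erw [Category.id_comp, Category.comp_id]; exact (ofComplex'_d_1_0 π₀).symm)
            (by erw [Category.id_comp, Category.comp_id]; exact (ChainComplex.toSingle₀Equiv_symm_apply_f_zero (C := ofComplex' π₀) π₀ _).symm)
      all_goals rfl
    · rw [quasiIsoAt_iff_exactAt']
      · apply ofComplex'_exactAt_succ
      · apply ChainComplex.exactAt_succ_single_obj⟩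

lemma res_X0 : (res π₀).complex.X 0 = P₀ := rfl

lemma res_π_f0 : (res π₀).π.f 0 = π₀ := by
  exact ChainComplex.toSingle₀Equiv_symm_apply_f_zero _ _

end Res

section ExtCompute

variable (k : Type*) [Field k] {C : Type u} [Category.{v} C] [Abelian C] [Linear k C]
  [EnoughProjectives C]

/-- the concrete short complex computing `Ext¹`. -/
abbrev extSC {X : C} (P : ProjectiveResolution X) (Y : C) : ShortComplex (ModuleCat k) :=
  (P.complex.linearYonedaObj k Y).sc' 0 1 2

/-- `Ext¹` is computed by the explicit short complex `extSC`. -/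
def ext1Iso {X : C} (P : ProjectiveResolution X) (Y : C) :
    ((Ext k C 1).obj (Opposite.op X)).obj Y ≅ (extSC k P Y).homology :=
  P.isoExt 1 Y ≪≫ (P.complex.linearYonedaObj k Y).homologyIsoSc' 0 1 2 (by simp) (by simp)

variable {k}

lemma coboundary_of_subsingleton {X : C} (P : ProjectiveResolution X) (Y : C)
    (hsub : Subsingleton (((Ext k C 1).obj (Opposite.op X)).obj Y))
    (g : P.complex.X 1 ⟶ Y) (hg : P.complex.d 2 1 ≫ g = 0) :
    ∃ h : P.complex.X 0 ⟶ Y, P.complex.d 1 0 ≫ h = g := by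
  have : Subsingleton ((extSC k P Y).homology : Type _) :=
    ((ext1Iso k P Y).toLinearEquiv.toEquiv.symm.subsingleton)
  have hz : IsZero ((extSC k P Y).homology) := ModuleCat.isZero_of_subsingleton _
  have hex : (extSC k P Y).Exact := (ShortComplex.exact_iff_isZero_homology _).2 hz
  rw [ShortComplex.moduleCat_exact_iff] at hex
  exact hex g hg

lemma finrank_ext1_eq_one {X : C} (P : ProjectiveResolution X) (Y : C)
    (g₀ : P.complex.X 1 ⟶ Y) (hg₀ : P.complex.d 2 1 ≫ g₀ = 0)
    (hnz : ∀ h : P.complex.X 0 ⟶ Y, P.complex.d 1 0 ≫ h ≠ g₀)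
    (hspan : ∀ g : P.complex.X 1 ⟶ Y, P.complex.d 2 1 ≫ g = 0 →
      ∃ (c : k) (h : P.complex.X 0 ⟶ Y), c • g₀ + P.complex.d 1 0 ≫ h = g) :
    Module.finrank k (((Ext k C 1).obj (Opposite.op X)).obj Y) = 1 := by
  set S := extSC k P Y
  have e : (((Ext k C 1).obj (Opposite.op X)).obj Y) ≃ₗ[k] (LinearMap.ker S.g.hom ⧸ LinearMap.range S.moduleCatToCycles) :=
    ((ext1Iso k P Y) ≪≫ S.moduleCatHomologyIso).toLinearEquiv
  rw [e.finrank_eq]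
  have hg₀' : (@id S.X₂ g₀) ∈ LinearMap.ker S.g.hom := hg₀
  refine finrank_eq_one (Submodule.Quotient.mk ⟨@id S.X₂ g₀, hg₀'⟩) ?_ ?_
  · intro h0
    rw [Submodule.Quotient.mk_eq_zero] at h0
    obtain ⟨h, hh⟩ := h0
    exact hnz h (congrArg Subtype.val hh)
  · intro w
    obtain ⟨⟨g, hg⟩, rfl⟩ := Submodule.Quotient.mk_surjective _ w
    obtain ⟨c, h, hch⟩ := hspan g hg
    refine ⟨c, ?_⟩
    rw [← Submodule.Quotient.mk_smul, ← sub_eq_zero, ← Submodule.Quotient.mk_sub,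
      Submodule.Quotient.mk_eq_zero]
    exact ⟨-h, Subtype.ext (by
      show P.complex.d 1 0 ≫ (-h) = c • g₀ - @id (P.complex.X 1 ⟶ Y) g
      rw [← hch, Preadditive.comp_neg, id_eq, sub_add_cancel_left])⟩

end ExtCompute

end OEPaux

end AuxiliaryLemmas

/-- Let `(E₁, E₂)` be an orthogonal exceptional pair (`Hom(E₁,E₂) = Hom(E₂,E₁) = 0` and
`Ext¹(E₂,E₁) = 0`) in a `k`-linear abelian category, and suppose there is a non-split short
exact sequence `0 → E₂ → E → E₁ → 0` with `E` exceptional.  Then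
`dim_k Ext¹(E₁,E₂) = dim_k Hom(E₂,E) = dim_k Hom(E,E₁) = 1`. -/
theorem orthogonal_exceptional_pair_dims
    (k : Type*) [Field k] (C : Type*) [Category C] [Abelian C] [Linear k C]
    [EnoughProjectives C]
    (E₁ E₂ E : C)
    (hE₁ : IsExceptional k C E₁) (hE₂ : IsExceptional k C E₂) (hE : IsExceptional k C E)
    (horth₁ : ∀ f : E₁ ⟶ E₂, f = 0) (horth₂ : ∀ f : E₂ ⟶ E₁, f = 0)
    (horth₃ : Subsingleton (((Ext k C 1).obj (Opposite.op E₂)).obj E₁))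
    (i : E₂ ⟶ E) (p : E ⟶ E₁) (w : i ≫ p = 0)
    (hex : (ShortComplex.mk i p w).ShortExact)
    (hnonsplit : ¬ ∃ s : E₁ ⟶ E, s ≫ p = 𝟙 E₁) :
    Module.finrank k (((Ext k C 1).obj (Opposite.op E₁)).obj E₂) = 1 ∧
    Module.finrank k (E₂ ⟶ E) = 1 ∧
    Module.finrank k (E ⟶ E₁) = 1 := by
  obtain ⟨hE₁rk, hE₁ext⟩ := hE₁
  obtain ⟨hE₂rk, hE₂ext⟩ := hE₂
  obtain ⟨hErk, hEext⟩ := hE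
  have : Mono i := hex.mono_f
  have : Epi p := hex.epi_g
  -- factorization through the kernel `i`
  have kfac : ∀ {T : C} (f : T ⟶ E), f ≫ p = 0 → ∃ g : T ⟶ E₂, g ≫ i = f := by
    intro T f hf
    obtain ⟨g, hg⟩ := KernelFork.IsLimit.lift' hex.fIsKernel f hf
    exact ⟨g, hg⟩
  -- factorization through the cokernel `p`
  have cfac : ∀ {T : C} (f : E ⟶ T), i ≫ f = 0 → ∃ g : E₁ ⟶ T, p ≫ g = f := by
    intro T f hf
    obtain ⟨g, hg⟩ := CokernelCofork.IsColimit.desc' hex.gIsCokernel f hf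
    exact ⟨g, hg⟩
  -- identities are nonzero
  have hid₁ : (𝟙 E₁) ≠ 0 := by
    intro h0
    have : Subsingleton (E₁ ⟶ E₁) := ⟨fun a b => by
      calc a = a ≫ 𝟙 E₁ := by simp
      _ = b ≫ 𝟙 E₁ := by rw [h0]; simp
      _ = b := by simp⟩
    rw [Module.finrank_zero_of_subsingleton] at hE₁rk
    exact one_ne_zero hE₁rk.symm
  have hid₂ : (𝟙 E₂) ≠ 0 := by
    intro h0
    have : Subsingleton (E₂ ⟶ E₂) := ⟨fun a b => by
      calc a = a ≫ 𝟙 E₂ := by simp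
      _ = b ≫ 𝟙 E₂ := by rw [h0]; simp
      _ = b := by simp⟩
    rw [Module.finrank_zero_of_subsingleton] at hE₂rk
    exact one_ne_zero hE₂rk.symm
  -- dim Hom(E₂, E) = 1
  have e2 : (E₂ ⟶ E₂) ≃ₗ[k] (E₂ ⟶ E) := by
    refine LinearEquiv.ofBijective (Linear.rightComp k E₂ i) ⟨?_, ?_⟩
    · intro a b hab
      exact (cancel_mono i).1 hab
    · intro f
      have hf : f ≫ p = 0 := horth₂ _
      obtain ⟨g, hg⟩ := kfac f hf
      exact ⟨g, hg⟩
  have dim2 : Module.finrank k (E₂ ⟶ E) = 1 := by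
    rw [← e2.finrank_eq]; exact hE₂rk
  -- dim Hom(E, E₁) = 1
  have e3 : (E₁ ⟶ E₁) ≃ₗ[k] (E ⟶ E₁) := by
    refine LinearEquiv.ofBijective (Linear.leftComp k E₁ p) ⟨?_, ?_⟩
    · intro a b hab
      exact (cancel_epi p).1 hab
    · intro f
      have hf : i ≫ f = 0 := by
        have := horth₂ (i ≫ f); simpa using this
      obtain ⟨g, hg⟩ := cfac f hf
      exact ⟨g, hg⟩
  have dim3 : Module.finrank k (E ⟶ E₁) = 1 := by
    rw [← e3.finrank_eq]; exact hE₁rk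
  -- every map E ⟶ E₁ is a multiple of p
  have hp0 : p ≠ 0 := by
    intro h0
    apply hid₁
    have h1 : p ≫ 𝟙 E₁ = p ≫ 0 := by rw [h0]; simp
    simpa using (cancel_epi p).1 h1
  have spanP : ∀ t : E ⟶ E₁, ∃ c : k, c • p = t :=
    (finrank_eq_one_iff_of_nonzero' p hp0).1 dim3
  have spanId₂ : ∀ u : E₂ ⟶ E₂, ∃ c : k, c • 𝟙 E₂ = u :=
    (finrank_eq_one_iff_of_nonzero' (𝟙 E₂) hid₂).1 hE₂rk
  refine ⟨?_, dim2, dim3⟩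
  -- the hard part : dim Ext¹(E₁, E₂) = 1
  classical
  set R : ProjectiveResolution E := ProjectiveResolution.of E with hR
  set α : R.complex.X 0 ⟶ E := R.π.f 0 with hα
  have hαepi : Epi α := inferInstanceAs (Epi (R.π.f 0))
  set π₀ : R.complex.X 0 ⟶ E₁ := α ≫ p with hπ₀
  have hπ₀epi : Epi π₀ := epi_comp _ _
  set P : ProjectiveResolution E₁ := OEPaux.res π₀ with hP
  have hπP : P.π.f 0 = π₀ := OEPaux.res_π_f0 π₀
  set d₁ : P.complex.X 1 ⟶ R.complex.X 0 := P.complex.d 1 0 with hd₁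
  set d₂ : P.complex.X 2 ⟶ P.complex.X 1 := P.complex.d 2 1 with hd₂
  have hd₁π : d₁ ≫ π₀ = 0 := by rw [← hπP]; exact P.complex_d_comp_π_f_zero
  have hd₂d₁ : d₂ ≫ d₁ = 0 := P.complex.d_comp_d 2 1 0
  have hd₁αp : (d₁ ≫ α) ≫ p = 0 := by rw [Category.assoc]; exact hd₁π
  obtain ⟨g₀, hg₀⟩ := kfac (d₁ ≫ α) hd₁αp
  have hg₀c : d₂ ≫ g₀ = 0 := by
    rw [← cancel_mono i, Category.assoc, hg₀, zero_comp, ← Category.assoc, hd₂d₁, zero_comp]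
  -- exactness of P in low degrees, with π₀ in place of P.π.f 0
  have hexact0 : (ShortComplex.mk d₁ π₀ hd₁π).Exact := by
    refine (ShortComplex.exact_iff_of_iso ?_).1 P.exact₀
    exact ShortComplex.isoMk (Iso.refl _) (Iso.refl _) (Iso.refl _)
      (by simp; erw [Category.comp_id]) (by simp [hπP]; erw [Category.id_comp, Category.comp_id])
  have hexact1 : (ShortComplex.mk d₂ d₁ hd₂d₁).Exact := P.exact_succ 0
  refine OEPaux.finrank_ext1_eq_one P E₂ g₀ hg₀c ?_ ?_
  · -- nonvanishing of the class of g₀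
    intro h hcon
    apply hnonsplit
    have hd₁β : d₁ ≫ (α - (show R.complex.X 0 ⟶ E from h ≫ i)) = 0 := by
      rw [Preadditive.comp_sub]; erw [← Category.assoc, hcon, hg₀, sub_self]
    obtain ⟨s, hs⟩ := CokernelCofork.IsColimit.desc' P.isColimitCokernelCofork
      (α - (show R.complex.X 0 ⟶ E from h ≫ i)) hd₁β
    have hs' : π₀ ≫ s = α - (show R.complex.X 0 ⟶ E from h ≫ i) := by
      rw [← hπP]; exact hs
    refine ⟨s, ?_⟩
    rw [← cancel_epi π₀]; erw [← Category.assoc, hs']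
    simp [Preadditive.sub_comp, Category.assoc, w]
    erw [Category.assoc, w, comp_zero, sub_zero]
  · -- spanning : every cocycle is c • g₀ + coboundary
    intro g hgc
    -- comparison maps between the resolutions R and P
    have hR10π₀ : R.complex.d 1 0 ≫ π₀ = 0 := by
      rw [hπ₀, ← Category.assoc]
      have : R.complex.d 1 0 ≫ α = 0 := R.complex_d_comp_π_f_zero
      rw [this, zero_comp]
    set φ₁ : R.complex.X 1 ⟶ P.complex.X 1 :=
      hexact0.liftFromProjective (R.complex.d 1 0) hR10π₀ with hφ₁def
    have hφ₁ : φ₁ ≫ d₁ = R.complex.d 1 0 := hexact0.liftFromProjective_comp _ _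
    have hR21φ₁ : (R.complex.d 2 1 ≫ φ₁) ≫ d₁ = 0 := by
      rw [Category.assoc, hφ₁, R.complex.d_comp_d]
    set ψ : R.complex.X 2 ⟶ P.complex.X 2 :=
      hexact1.liftFromProjective (R.complex.d 2 1 ≫ φ₁) hR21φ₁ with hψdef
    have hψ : ψ ≫ d₂ = R.complex.d 2 1 ≫ φ₁ := hexact1.liftFromProjective_comp _ _
    -- vanishing of Ext¹(E, E₂) at the cocycle level
    have S1 : ∀ u : R.complex.X 1 ⟶ E₂, R.complex.d 2 1 ≫ u = 0 →
        ∃ h : R.complex.X 0 ⟶ E₂, R.complex.d 1 0 ≫ h = u := by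
      intro u hu0
      have h1 : R.complex.d 2 1 ≫ (u ≫ i) = 0 := by
        rw [← Category.assoc, hu0, zero_comp]
      obtain ⟨β, hβ⟩ := OEPaux.coboundary_of_subsingleton R E hEext (u ≫ i) h1
      have h2 : R.complex.d 1 0 ≫ (β ≫ p) = 0 := by
        rw [← Category.assoc, hβ, Category.assoc, w, comp_zero]
      obtain ⟨t, ht⟩ := CokernelCofork.IsColimit.desc' R.isColimitCokernelCofork (β ≫ p) h2
      have ht' : α ≫ t = β ≫ p := by exact ht
      obtain ⟨c, hc⟩ := spanP t
      have hker : (β - c • α) ≫ p = 0 := by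
        rw [Preadditive.sub_comp, Linear.smul_comp, ← ht', ← hc, Linear.comp_smul, sub_self]
      obtain ⟨w', hw'⟩ := kfac (β - c • α) hker
      refine ⟨w', ?_⟩
      have hRα : R.complex.d 1 0 ≫ α = 0 := R.complex_d_comp_π_f_zero
      rw [← cancel_mono i, Category.assoc, hw', Preadditive.comp_sub, hβ,
        Linear.comp_smul, hRα, smul_zero, sub_zero]
    obtain ⟨h, hh⟩ := S1 (φ₁ ≫ g) (by rw [← Category.assoc, ← hψ, Category.assoc, hgc, comp_zero])
    set g' : P.complex.X 1 ⟶ E₂ := g - d₁ ≫ h with hg'def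
    have hφg' : φ₁ ≫ g' = 0 := by
      rw [hg'def, Preadditive.comp_sub, ← Category.assoc, hφ₁, hh, sub_self]
    have hg'c : d₂ ≫ g' = 0 := by
      rw [hg'def, Preadditive.comp_sub, hgc, ← Category.assoc, hd₂d₁, zero_comp, sub_self]
    -- the syzygy object
    set K := kernel π₀ with hK
    set ι : K ⟶ R.complex.X 0 := kernel.ι π₀ with hι
    set e : P.complex.X 1 ⟶ K := kernel.lift π₀ d₁ hd₁π with hedef
    have heι : e ≫ ι = d₁ := kernel.lift_ι _ _ _
    have he : Epi e := by
      have := (ShortComplex.exact_iff_epi_kernel_lift (ShortComplex.mk d₁ π₀ hd₁π)).1 hexact0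
      exact this
    have hιαp : (ι ≫ α) ≫ p = 0 := by
      rw [Category.assoc, ← hπ₀, kernel.condition]
    obtain ⟨q, hq⟩ := kfac (ι ≫ α) hιαp
    have heq : e ≫ q = g₀ := by
      rw [← cancel_mono i, Category.assoc, hq, ← Category.assoc, heι, hg₀]
    -- q is an epimorphism, being a pullback of the epimorphism α
    have hpb : IsPullback q ι i α :=
      IsPullback.of_isLimit (PullbackCone.IsLimit.mk hq
        (fun s => kernel.lift π₀ s.snd (by
          rw [hπ₀, ← Category.assoc, ← s.condition, Category.assoc, w, comp_zero]))
        (fun s => by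
          rw [← cancel_mono i, Category.assoc, hq, ← Category.assoc, kernel.lift_ι, s.condition])
        (fun s => kernel.lift_ι _ _ _)
        (fun s m hm₁ hm₂ => by
          rw [← cancel_mono ι, hm₂, kernel.lift_ι]))
    have hqepi : Epi q := by
      have h1 : Epi (pullback.fst i α) := by infer_instance
      have h2 : hpb.isoPullback.hom ≫ pullback.fst i α = q := hpb.isoPullback_hom_fst
      rw [← h2]; exact epi_comp _ _
    -- descend g' along e
    have hkere : kernel.ι e ≫ g' = 0 := by
      have h1 : kernel.ι e ≫ d₁ = 0 := by
        rw [← heι, ← Category.assoc, kernel.condition, zero_comp]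
      have htc : Epi (ShortComplex.mk d₂ d₁ hd₂d₁).toCycles :=
        (ShortComplex.exact_iff_epi_toCycles _).1 hexact1
      have h2 : (ShortComplex.mk d₂ d₁ hd₂d₁).iCycles ≫ g' = 0 := by
        rw [← cancel_epi (ShortComplex.mk d₂ d₁ hd₂d₁).toCycles, ← Category.assoc,
          ShortComplex.toCycles_i, comp_zero]
        exact hg'c
      rw [← (ShortComplex.mk d₂ d₁ hd₂d₁).liftCycles_i (kernel.ι e) h1, Category.assoc, h2,
        comp_zero]
    set gK : K ⟶ E₂ := Abelian.epiDesc e g' hkere with hgKdef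
    have hgK : e ≫ gK = g' := Abelian.comp_epiDesc _ _ _
    -- gK kills the kernel of q
    have hιA : kernel.ι α ≫ π₀ = 0 := by
      rw [hπ₀, ← Category.assoc, kernel.condition, zero_comp]
    set j : kernel α ⟶ K := kernel.lift π₀ (kernel.ι α) hιA with hjdef
    have hjι : j ≫ ι = kernel.ι α := kernel.lift_ι _ _ _
    have hRα : R.complex.d 1 0 ≫ α = 0 := R.complex_d_comp_π_f_zero
    set eR : R.complex.X 1 ⟶ kernel α := kernel.lift α (R.complex.d 1 0) hRα with heRdef
    have heRι : eR ≫ kernel.ι α = R.complex.d 1 0 := kernel.lift_ι _ _ _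
    have heR : Epi eR := by
      have := (ShortComplex.exact_iff_epi_kernel_lift
        (ShortComplex.mk (R.complex.d 1 0) α hRα)).1 ?_
      · exact this
      · refine (ShortComplex.exact_iff_of_iso ?_).1 R.exact₀
        exact ShortComplex.isoMk (Iso.refl _) (Iso.refl _) (Iso.refl _)
          (by simp) (by simp [hα]; erw [Category.id_comp, Category.comp_id])
    have heRj : eR ≫ j = φ₁ ≫ e := by
      rw [← cancel_mono ι, Category.assoc, hjι, heRι, Category.assoc, heι, hφ₁]
    have hjgK : j ≫ gK = 0 := by
      rw [← cancel_epi eR, ← Category.assoc, heRj, Category.assoc, hgK, hφg', comp_zero]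
    have hkq : kernel.ι q ≫ gK = 0 := by
      have hm0 : (kernel.ι q ≫ ι) ≫ α = 0 := by
        rw [Category.assoc, ← hq, ← Category.assoc, kernel.condition, zero_comp]
      set m : kernel q ⟶ kernel α := kernel.lift α (kernel.ι q ≫ ι) hm0 with hmdef
      have hmj : m ≫ j = kernel.ι q := by
        rw [← cancel_mono ι, Category.assoc, hjι, kernel.lift_ι]
      rw [← hmj, Category.assoc, hjgK, comp_zero]
    set u : E₂ ⟶ E₂ := Abelian.epiDesc q gK hkq with hudef
    have hqu : q ≫ u = gK := Abelian.comp_epiDesc _ _ _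
    obtain ⟨c, hc⟩ := spanId₂ u
    refine ⟨c, h, ?_⟩
    have hg'eq : g' = c • g₀ := by
      calc g' = e ≫ gK := hgK.symm
        _ = e ≫ (q ≫ u) := by rw [hqu]
        _ = c • (e ≫ q) := by
            rw [← hc, Linear.comp_smul, Category.comp_id, Linear.comp_smul]
        _ = c • g₀ := by rw [heq]
    rw [← hd₁, ← hg'eq, hg'def]
    exact sub_add_cancel g (d₁ ≫ h)
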